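/- Let G=(V,E) be an r-uniform hypergraph with r ≥ 1. Then J = { u ∈ S : ⟨p,u⟩ = 0 for every probabilistic model p of G }, where ⟨p,u⟩ := Σ_{e∈E} Σ_{x∈e} p(x) u_x^e. -/

import Mathlib

noncomputable section

open scoped ComplexOrder

/-- The index set of the direct sum `S = ⊕_{e ∈ E} ℂ^e`: pairs `(e, x)` with `e ∈ E`, `x ∈ e`. -/
abbrev Idx {V : Type} [DecidableEq V] (E : Finset (Finset V)) : Type :=
  {p : Finset V × V // p.1 ∈ E ∧ p.2 ∈ p.1}

/-- The canonical basis vector `δ_x^e` of `S`. -/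
def delta {V : Type} [DecidableEq V] (E : Finset (Finset V)) (e : Finset V) (x : V) :
    Idx E → ℂ :=
  fun i => if i.1 = (e, x) then 1 else 0

/-- The element `1_e := ∑_{x ∈ e} δ_x^e` of `S`. -/
def oneEdge {V : Type} [DecidableEq V] (E : Finset (Finset V)) (e : Finset V) :
    Idx E → ℂ :=
  ∑ x ∈ e, delta E e x

/-- The subspace `J` of `S`, spanned by the elements `1_e − 1_f` and `δ_x^e − δ_x^f`. -/
def Jsub {V : Type} [DecidableEq V] (E : Finset (Finset V)) : Submodule ℂ (Idx E → ℂ) :=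
  Submodule.span ℂ
    ({u | ∃ e ∈ E, ∃ f ∈ E, u = oneEdge E e - oneEdge E f} ∪
     {u | ∃ e ∈ E, ∃ f ∈ E, ∃ x, x ∈ e ∧ x ∈ f ∧ u = delta E e x - delta E f x})

section aux
set_option linter.unusedSectionVars false
variable {V : Type} [Fintype V] [DecidableEq V] {E : Finset (Finset V)}

lemma delta_eq_single {e : Finset V} {x : V} (he : e ∈ E) (hx : x ∈ e) :
    delta E e x = Pi.single (⟨(e, x), he, hx⟩ : Idx E) 1 := by
  funext i
  by_cases h : i = (⟨(e, x), he, hx⟩ : Idx E)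
  · subst h; simp [delta]
  · have h' : i.1 ≠ (e, x) := fun hh => h (Subtype.ext hh)
    simp [delta, h', Pi.single_apply, h]

lemma sum_mul_delta (c : V → ℂ) {e : Finset V} {x : V} (he : e ∈ E) (hx : x ∈ e) :
    ∑ i : Idx E, c i.1.2 * delta E e x i = c x := by
  rw [delta_eq_single he hx]
  rw [Fintype.sum_eq_single (⟨(e, x), he, hx⟩ : Idx E)]
  · simp
  · intro i hi; simp [Pi.single_apply, hi]

lemma sum_mul_oneEdge (c : V → ℂ) {e : Finset V} (he : e ∈ E) :
    ∑ i : Idx E, c i.1.2 * oneEdge E e i = ∑ x ∈ e, c x := by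
  simp only [oneEdge, Finset.sum_apply, Finset.mul_sum]
  rw [Finset.sum_comm]
  exact Finset.sum_congr rfl fun x hx => sum_mul_delta c he hx

/-- The constant function `1/r` is a probabilistic model. -/
lemma const_model (r : ℕ) (hr : 1 ≤ r) (hunif : ∀ e ∈ E, e.card = r) :
    (∀ x : V, 0 ≤ (fun _ : V => (1:ℝ)/r) x ∧ (fun _ : V => (1:ℝ)/r) x ≤ 1) ∧
      ∀ e ∈ E, ∑ _x ∈ e, (1:ℝ)/r = 1 := by
  have hrpos : (0:ℝ) < r := by
    have : (1:ℝ) ≤ r := by exact_mod_cast hr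
    linarith
  constructor
  · intro x
    constructor
    · positivity
    · rw [div_le_one hrpos]
      exact_mod_cast hr
  · intro e he
    rw [Finset.sum_const, hunif e he, nsmul_eq_mul]
    field_simp

lemma eq_sum_delta (u : Idx E → ℂ) :
    u = ∑ i : Idx E, u i • delta E i.1.1 i.1.2 := by
  funext j
  rw [Finset.sum_apply, Fintype.sum_eq_single j]
  · simp [delta]
  · intro i hi
    have h1 : j.1 ≠ (i.1.1, i.1.2) := fun hh => hi (Subtype.ext (by simpa using hh.symm))
    simp [delta, h1]

lemma lemA (r : ℕ) (hr : 1 ≤ r) (hunif : ∀ e ∈ E, e.card = r) (u : Idx E → ℂ)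
    (h : ∀ p : V → ℝ, ((∀ x, 0 ≤ p x ∧ p x ≤ 1) ∧ ∀ e ∈ E, ∑ x ∈ e, p x = 1) →
      ∑ i : Idx E, (p i.1.2 : ℂ) * u i = 0)
    (q : V → ℝ) (hq : ∀ e ∈ E, ∑ x ∈ e, q x = 0) :
    ∑ i : Idx E, (q i.1.2 : ℂ) * u i = 0 := by
  have hrpos : (0:ℝ) < r := by
    have : (1:ℝ) ≤ r := by exact_mod_cast hr
    linarith
  rcases eq_or_lt_of_le hr with h1 | h2
  · -- r = 1 : q vanishes on every vertex of an edge
    apply Finset.sum_eq_zero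
    intro i _
    have he : i.1.1 ∈ E := i.2.1
    have hx : i.1.2 ∈ i.1.1 := i.2.2
    have hc : i.1.1.card = 1 := by rw [hunif _ he, ← h1]
    obtain ⟨a, ha⟩ := Finset.card_eq_one.mp hc
    have hxa : i.1.2 = a := by rw [ha] at hx; simpa using hx
    have := hq _ he
    rw [ha, Finset.sum_singleton, ← hxa] at this
    rw [this]
    simp
  · -- r ≥ 2
    have hhalf : (1:ℝ)/r ≤ 1/2 := by
      apply div_le_div_of_nonneg_left (by norm_num) (by norm_num)
      exact_mod_cast h2
    obtain ⟨M, hM⟩ := Finite.exists_le (fun x : V => |q x|)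
    set M' : ℝ := max M 0 with hM'
    have hM'0 : 0 ≤ M' := le_max_right _ _
    have hMq : ∀ x, |q x| ≤ M' := fun x => le_trans (hM x) (le_max_left _ _)
    set m : ℝ := min (1/r) (1 - 1/r) with hm
    have hmpos : 0 < m := by
      apply lt_min
      · positivity
      · linarith
    set ε : ℝ := m / (M' + 1) with hε
    have hεpos : 0 < ε := by positivity
    have hbound : ∀ x, |ε * q x| ≤ m := by
      intro x
      rw [abs_mul, abs_of_pos hεpos]
      calc ε * |q x| ≤ ε * (M' + 1) := by
            apply mul_le_mul_of_nonneg_left _ hεpos.le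
            linarith [hMq x]
        _ = m := by
            rw [hε]
            exact div_mul_cancel₀ m (by positivity)
    set p : V → ℝ := fun x => 1/r + ε * q x with hp
    have hmodel : (∀ x, 0 ≤ p x ∧ p x ≤ 1) ∧ ∀ e ∈ E, ∑ x ∈ e, p x = 1 := by
      constructor
      · intro x
        have hb := abs_le.mp (hbound x)
        have hm1 : m ≤ 1/r := min_le_left _ _
        have hm2 : m ≤ 1 - 1/r := min_le_right _ _
        have hpx : p x = 1/r + ε * q x := rfl
        constructor
        · rw [hpx]; linarith
        · rw [hpx]; linarith
      · intro e he
        show ∑ x ∈ e, (1/(r:ℝ) + ε * q x) = 1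
        rw [Finset.sum_add_distrib, ← Finset.mul_sum, hq e he, mul_zero, add_zero,
          Finset.sum_const, hunif e he, nsmul_eq_mul]
        field_simp
    have h1' := h p hmodel
    have h2' := h (fun _ => 1/r) (const_model r hr hunif)
    have expand : ∑ i : Idx E, ((p i.1.2 : ℝ) : ℂ) * u i
        = ∑ i : Idx E, (((1:ℝ)/r : ℝ) : ℂ) * u i
          + (ε : ℂ) * ∑ i : Idx E, (q i.1.2 : ℂ) * u i := by
      rw [Finset.mul_sum, ← Finset.sum_add_distrib]
      apply Finset.sum_congr rfl
      intro i _
      simp only [hp]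
      push_cast
      ring
    rw [h1', h2', zero_add] at expand
    have hεC : (ε : ℂ) ≠ 0 := by exact_mod_cast hεpos.ne'
    exact (mul_eq_zero.mp expand.symm).resolve_left hεC

lemma lemB (hEne : E.Nonempty) (r : ℕ) (hr : 1 ≤ r) (hunif : ∀ e ∈ E, e.card = r)
    (u : Idx E → ℂ)
    (h : ∀ p : V → ℝ, ((∀ x, 0 ≤ p x ∧ p x ≤ 1) ∧ ∀ e ∈ E, ∑ x ∈ e, p x = 1) →
      ∑ i : Idx E, (p i.1.2 : ℂ) * u i = 0)
    (q : V → ℂ) (hq : ∀ e ∈ E, ∀ f ∈ E, ∑ x ∈ e, q x = ∑ x ∈ f, q x) :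
    ∑ i : Idx E, q i.1.2 * u i = 0 := by
  have hrpos : (0:ℝ) < r := by
    have : (1:ℝ) ≤ r := by exact_mod_cast hr
    linarith
  have hrC : (r : ℂ) ≠ 0 := by exact_mod_cast hrpos.ne'
  obtain ⟨e₀, he₀⟩ := hEne
  set lam : ℂ := ∑ x ∈ e₀, q x with hlam
  -- sum of u over all coordinates is zero
  have hsumu : ∑ i : Idx E, u i = 0 := by
    have := h (fun _ => 1/r) (const_model r hr hunif)
    simp only [one_div] at this
    rw [← Finset.mul_sum] at this
    have h0 : (((r:ℝ)⁻¹ : ℝ) : ℂ) ≠ 0 := by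
      exact_mod_cast inv_ne_zero hrpos.ne'
    exact (mul_eq_zero.mp this).resolve_left h0
  set q' : V → ℂ := fun x => q x - lam / r with hq'
  have hq'sum : ∀ e ∈ E, ∑ x ∈ e, q' x = 0 := by
    intro e he
    simp only [hq']
    rw [Finset.sum_sub_distrib, Finset.sum_const, hunif e he, nsmul_eq_mul,
      hq e he e₀ he₀, ← hlam]
    field_simp
    ring
  -- real and imaginary parts
  have hre : ∀ e ∈ E, ∑ x ∈ e, (q' x).re = 0 := by
    intro e he
    rw [← Complex.re_sum, hq'sum e he, Complex.zero_re]
  have him : ∀ e ∈ E, ∑ x ∈ e, (q' x).im = 0 := by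
    intro e he
    rw [← Complex.im_sum, hq'sum e he, Complex.zero_im]
  have hA := lemA r hr hunif u h (fun x => (q' x).re) hre
  have hB := lemA r hr hunif u h (fun x => (q' x).im) him
  have hq'u : ∑ i : Idx E, q' i.1.2 * u i = 0 := by
    have : ∑ i : Idx E, q' i.1.2 * u i
        = (∑ i : Idx E, ((q' i.1.2).re : ℂ) * u i)
          + Complex.I * ∑ i : Idx E, ((q' i.1.2).im : ℂ) * u i := by
      rw [Finset.mul_sum, ← Finset.sum_add_distrib]
      apply Finset.sum_congr rfl
      intro i _
      conv_lhs => rw [← Complex.re_add_im (q' i.1.2)]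
      ring
    rw [this, hA, hB, mul_zero, add_zero]
  calc ∑ i : Idx E, q i.1.2 * u i
      = ∑ i : Idx E, (q' i.1.2 * u i + (lam / r) * u i) := by
        apply Finset.sum_congr rfl
        intro i _
        simp only [hq']
        ring
    _ = ∑ i : Idx E, q' i.1.2 * u i + (lam / r) * ∑ i : Idx E, u i := by
        rw [Finset.sum_add_distrib, Finset.mul_sum]
    _ = 0 := by rw [hq'u, hsumu, mul_zero, add_zero]

end aux

theorem stmt13 (V : Type) [Fintype V] [DecidableEq V] (E : Finset (Finset V))
    (hEne : E.Nonempty) (hene : ∀ e ∈ E, e.Nonempty)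
    (r : ℕ) (hr : 1 ≤ r) (hunif : ∀ e ∈ E, e.card = r)
    (u : Idx E → ℂ) :
    u ∈ Jsub E ↔
      ∀ p : V → ℝ,
        ((∀ x, 0 ≤ p x ∧ p x ≤ 1) ∧ ∀ e ∈ E, ∑ x ∈ e, p x = 1) →
        ∑ i : Idx E, (p i.1.2 : ℂ) * u i = 0 := by
  constructor
  · -- forward: J annihilated by all probabilistic models
    intro hu p hp
    set F : (Idx E → ℂ) →ₗ[ℂ] ℂ :=
      { toFun := fun v => ∑ i : Idx E, (p i.1.2 : ℂ) * v i,
        map_add' := by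
          intro v w
          simp only [Pi.add_apply, mul_add, Finset.sum_add_distrib]
        map_smul' := by
          intro c v
          simp only [Pi.smul_apply, smul_eq_mul, RingHom.id_apply, Finset.mul_sum]
          apply Finset.sum_congr rfl
          intro i _
          ring } with hF
    have hFone : ∀ e ∈ E, F (oneEdge E e) = 1 := by
      intro e he
      have : F (oneEdge E e) = ∑ x ∈ e, ((p x : ℝ) : ℂ) :=
        sum_mul_oneEdge (fun x => (p x : ℂ)) he
      rw [this, ← Complex.ofReal_sum, hp.2 e he, Complex.ofReal_one]
    have hker : Jsub E ≤ LinearMap.ker F := by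
      rw [Jsub, Submodule.span_le]
      rintro g (⟨e, he, f, hf, rfl⟩ | ⟨e, he, f, hf, x, hxe, hxf, rfl⟩)
      · rw [SetLike.mem_coe, LinearMap.mem_ker, map_sub, hFone e he, hFone f hf, sub_self]
      · rw [SetLike.mem_coe, LinearMap.mem_ker, map_sub]
        have h1 : F (delta E e x) = (p x : ℂ) := sum_mul_delta (fun y => (p y : ℂ)) he hxe
        have h2 : F (delta E f x) = (p x : ℂ) := sum_mul_delta (fun y => (p y : ℂ)) hf hxf
        rw [h1, h2, sub_self]
    exact hker hu
  · -- backward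
    intro h
    rw [← Submodule.Quotient.mk_eq_zero, ← Module.forall_dual_apply_eq_zero_iff ℂ]
    intro φ
    set ψ : (Idx E → ℂ) →ₗ[ℂ] ℂ := φ.comp (Jsub E).mkQ with hψ
    have hψJ : ∀ v ∈ Jsub E, ψ v = 0 := by
      intro v hv
      simp only [hψ, LinearMap.comp_apply, Submodule.mkQ_apply,
        (Submodule.Quotient.mk_eq_zero _).mpr hv, map_zero]
    -- the coefficient function
    classical
    set q : V → ℂ := fun x =>
      if hx : ∃ e, e ∈ E ∧ x ∈ e then ψ (delta E hx.choose x) else 0 with hqdef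
    have hqval : ∀ e ∈ E, ∀ x ∈ e, ψ (delta E e x) = q x := by
      intro e he x hx
      have hex : ∃ e', e' ∈ E ∧ x ∈ e' := ⟨e, he, hx⟩
      have hc := hex.choose_spec
      have hgen : delta E e x - delta E hex.choose x ∈ Jsub E := by
        apply Submodule.subset_span
        exact Or.inr ⟨e, he, hex.choose, hc.1, x, hx, hc.2, rfl⟩
      have := hψJ _ hgen
      rw [map_sub, sub_eq_zero] at this
      rw [hqdef]
      simp only [hex, dif_pos]
      exact this
    have hqedge : ∀ e ∈ E, ∑ x ∈ e, q x = ψ (oneEdge E e) := by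
      intro e he
      rw [oneEdge, map_sum]
      exact Finset.sum_congr rfl fun x hx => (hqval e he x hx).symm
    have hqconst : ∀ e ∈ E, ∀ f ∈ E, ∑ x ∈ e, q x = ∑ x ∈ f, q x := by
      intro e he f hf
      rw [hqedge e he, hqedge f hf]
      have hgen : oneEdge E e - oneEdge E f ∈ Jsub E := by
        apply Submodule.subset_span
        exact Or.inl ⟨e, he, f, hf, rfl⟩
      have := hψJ _ hgen
      rwa [map_sub, sub_eq_zero] at this
    have hψu : ψ u = ∑ i : Idx E, q i.1.2 * u i := by
      conv_lhs => rw [eq_sum_delta u]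
      rw [map_sum]
      apply Finset.sum_congr rfl
      intro i _
      rw [map_smul, smul_eq_mul, hqval i.1.1 i.2.1 i.1.2 i.2.2]
      ring
    have hfinal := lemB hEne r hr hunif u h q hqconst
    show φ (Submodule.Quotient.mk u) = 0
    have : φ (Submodule.Quotient.mk u) = ψ u := rfl
    rw [this, hψu, hfinal]
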